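/- Unique compatible base extension to the algebraic closure: Let k be a field of characteristic zero with a biderivation b_k, and let R be a finitely generated k-algebra which is an integral domain, with a biderivation b_R such that the structure map k → R is bidifferential. Then there exists a unique biderivation b' on R ⊗_k k̄, where k̄ is an algebraic closure of k, such that the map r ↦ r⊗1 : R → R ⊗_k k̄ is bidifferential (b'(r⊗1, r'⊗1) = b_R(r,r')⊗1). Moreover, for this b': the map c ↦ 1⊗c : k̄ → R ⊗_k k̄ carries the unique biderivation on k̄ extending b_k, i.e., the restriction of b' to 1⊗k̄ takes values in 1⊗k̄ and extends b_k on k; and r ↦ r⊗1 is lifting: for every bidifferential ideal I of (R, b_R), the extended ideal I·(R ⊗_k k̄) is a bidifferential ideal of (R ⊗_k k̄, b'). -/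

import Mathlib

set_option synthInstance.maxHeartbeats 1000000
set_option maxHeartbeats 1000000

open TensorProduct

/-- A derivation on a commutative ring `R` (with values in `R`). -/
def IsDerivO {R : Type*} [CommRing R] (d : R → R) : Prop :=
  (∀ x y : R, d (x + y) = d x + d y) ∧ (∀ x y : R, d (x * y) = x * d y + y * d x)

/-- A biderivation on a commutative ring `R`. -/
def IsBiderivO {R : Type*} [CommRing R] (b : R → R → R) : Prop :=
  (∀ r : R, IsDerivO (b r)) ∧ (∀ s : R, IsDerivO (fun r => b r s))

/-- An ideal `I` is a bidifferential ideal of `(R, b)` if `b(I × R) ⊆ I` and `b(R × I) ⊆ I`. -/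
def IsBidiffIdeal {R : Type*} [CommRing R] (b : R → R → R) (I : Ideal R) : Prop :=
  ∀ a ∈ I, ∀ x : R, b a x ∈ I ∧ b x a ∈ I

universe uA uk uR

/-! ### Auxiliary lemmas on unbundled derivations -/

section AuxDeriv

open Polynomial

variable {A B T : Type*} [CommRing A] [CommRing B] [CommRing T]

lemma derivO_map_zero {D : B → T} (hadd : ∀ x y : B, D (x + y) = D x + D y) : D 0 = 0 := by
  have h := hadd 0 0
  rw [add_zero] at h
  exact (add_eq_right.mp h.symm)

lemma derivO_map_one (ψ : B →+* T) {D : B → T}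
    (hleib : ∀ x y : B, D (x * y) = ψ x * D y + ψ y * D x) : D 1 = 0 := by
  have h := hleib 1 1
  simp only [mul_one, map_one, one_mul] at h
  exact right_eq_add.mp h

lemma derivO_pow (ψ : B →+* T) {D : B → T}
    (hleib : ∀ x y : B, D (x * y) = ψ x * D y + ψ y * D x) (x : B) :
    ∀ n : ℕ, D (x ^ n) = (n : T) * ψ x ^ (n - 1) * D x := by
  intro n
  induction n with
  | zero => simp [pow_zero, derivO_map_one ψ hleib]
  | succ n ih =>
    rw [pow_succ, hleib, ih, map_pow]
    cases n with
    | zero => simp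
    | succ m =>
      have h1 : (m + 1 : ℕ) - 1 = m := rfl
      have h2 : (m + 1 + 1 : ℕ) - 1 = m + 1 := rfl
      rw [h1, h2]
      have hp : ψ x ^ (m + 1) = ψ x ^ m * ψ x := pow_succ _ _
      rw [hp]
      push_cast
      ring

lemma derivO_eval₂ (φ : A →+* B) (ψ : B →+* T) {D : B → T}
    (hadd : ∀ x y : B, D (x + y) = D x + D y)
    (hleib : ∀ x y : B, D (x * y) = ψ x * D y + ψ y * D x)
    (h0 : ∀ a : A, D (φ a) = 0) (x : B) (q : A[X]) :
    D (q.eval₂ φ x) = ψ ((derivative q).eval₂ φ x) * D x := by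
  induction q using Polynomial.induction_on' with
  | add p q hp hq =>
    rw [eval₂_add, hadd, hp, hq, derivative_add, eval₂_add, map_add]; ring
  | monomial n a =>
    rw [eval₂_monomial, derivative_monomial, eval₂_monomial, hleib, h0,
      derivO_pow ψ hleib]
    simp only [map_mul, map_pow, map_natCast]
    ring

end AuxDeriv

/-! ### Uniqueness of extensions of derivations -/

section Uniq

open Polynomial

variable {k K : Type*} [Field k] [Field K] [Algebra k K] [Algebra.IsSeparable k K]

lemma derivO_eq_zero_algebraic {T : Type*} [CommRing T] (ψ : K →+* T) (D : K → T)
    (hadd : ∀ x y : K, D (x + y) = D x + D y)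
    (hleib : ∀ x y : K, D (x * y) = ψ x * D y + ψ y * D x)
    (h0 : ∀ a : k, D (algebraMap k K a) = 0) : ∀ x : K, D x = 0 := by
  intro c
  have hsep := Algebra.IsSeparable.isSeparable k c
  have h1 : D (Polynomial.eval₂ (algebraMap k K) c (minpoly k c)) = 0 := by
    rw [← aeval_def, minpoly.aeval]
    exact derivO_map_zero hadd
  rw [derivO_eval₂ (algebraMap k K) ψ hadd hleib h0] at h1
  have hne : aeval c (derivative (minpoly k c)) ≠ 0 :=
    hsep.aeval_derivative_ne_zero (minpoly.aeval k c)
  have hu : IsUnit (ψ (Polynomial.eval₂ (algebraMap k K) c (derivative (minpoly k c)))) := by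
    rw [← aeval_def]
    exact (isUnit_iff_ne_zero.mpr hne).map ψ
  exact (hu.mul_right_eq_zero).mp h1

variable {R T : Type*} [CommRing R] [Algebra k R] [CommRing T]

lemma derivO_eq_zero_tensor (ψ : R ⊗[k] K →+* T) (D : R ⊗[k] K → T)
    (hadd : ∀ x y : R ⊗[k] K, D (x + y) = D x + D y)
    (hleib : ∀ x y : R ⊗[k] K, D (x * y) = ψ x * D y + ψ y * D x)
    (h0 : ∀ r : R, D (r ⊗ₜ 1) = 0) : ∀ x : R ⊗[k] K, D x = 0 := by
  have hφ : ∀ r : R, (Algebra.TensorProduct.includeLeftRingHom (R := k) (A := R) (B := K)) r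
      = r ⊗ₜ (1 : K) := fun r => rfl
  set φ : R →+* R ⊗[k] K := Algebra.TensorProduct.includeLeftRingHom with hφdef
  have h0' : ∀ r : R, D (φ r) = 0 := fun r => by rw [hφ]; exact h0 r
  have hev : ∀ (c : K) (q : k[X]),
      Polynomial.eval₂ φ ((1 : R) ⊗ₜ c) (q.map (algebraMap k R))
        = (1 : R) ⊗ₜ (aeval c q) := by
    intro c q
    rw [Polynomial.eval₂_map]
    have hcomp : φ.comp (algebraMap k R) = algebraMap k (R ⊗[k] K) := by
      ext a
      exact (Algebra.TensorProduct.includeLeft (R := k) (S := k) (A := R)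
        (B := K)).commutes a
    rw [hcomp, ← aeval_def]
    exact Polynomial.aeval_algHom_apply
      (Algebra.TensorProduct.includeRight (R := k) (A := R) (B := K)) c q
  have key : ∀ c : K, D ((1 : R) ⊗ₜ c) = 0 := by
    intro c
    have hsep := Algebra.IsSeparable.isSeparable k c
    have h1 : D (Polynomial.eval₂ φ ((1 : R) ⊗ₜ c) ((minpoly k c).map (algebraMap k R))) = 0 := by
      rw [hev, minpoly.aeval, TensorProduct.tmul_zero]
      exact derivO_map_zero hadd
    rw [derivO_eval₂ φ ψ hadd hleib h0'] at h1
    rw [Polynomial.derivative_map, hev] at h1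
    have hne : aeval c (derivative (minpoly k c)) ≠ 0 :=
      hsep.aeval_derivative_ne_zero (minpoly.aeval k c)
    have hu : IsUnit ((1 : R) ⊗ₜ[k] (aeval c (derivative (minpoly k c))) : R ⊗[k] K) := by
      apply IsUnit.of_mul_eq_one ((1 : R) ⊗ₜ (aeval c (derivative (minpoly k c)))⁻¹)
      rw [Algebra.TensorProduct.tmul_mul_tmul, one_mul, mul_inv_cancel₀ hne]
      rfl
    exact ((hu.map ψ).mul_right_eq_zero).mp h1
  intro x
  induction x using TensorProduct.induction_on with
  | zero => exact derivO_map_zero hadd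
  | tmul r c =>
    have hrc : (r ⊗ₜ c : R ⊗[k] K) = (r ⊗ₜ 1) * ((1 : R) ⊗ₜ c) := by
      rw [Algebra.TensorProduct.tmul_mul_tmul, mul_one, one_mul]
    rw [hrc, hleib, key, h0, mul_zero, mul_zero, add_zero]
  | add x y hx hy => rw [hadd, hx, hy, add_zero]

end Uniq

/-! ### Existence of extensions of derivations -/

section Ext

open TrivSqZeroExt

lemma derivO_extend_of_formallySmooth {A B : Type uA} [CommRing A] [CommRing B] [Algebra A B]
    [Algebra.FormallySmooth A B] (d : A → B)
    (hadd : ∀ x y : A, d (x + y) = d x + d y)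
    (hmul : ∀ x y : A, d (x * y) = algebraMap A B x * d y + algebraMap A B y * d x) :
    ∃ D : B → B, IsDerivO D ∧ ∀ a : A, D (algebraMap A B a) = d a := by
  classical
  have hd0 : d 0 = 0 := by
    have h := hadd 0 0
    rw [add_zero] at h
    exact (add_eq_right.mp h.symm)
  have hd1 : d 1 = 0 := by
    have h := hmul 1 1
    simp only [mul_one, map_one, one_mul] at h
    exact right_eq_add.mp h
  set fA : A →+* TrivSqZeroExt B B := {
    toFun := fun a => TrivSqZeroExt.inl (algebraMap A B a) + TrivSqZeroExt.inr (d a)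
    map_one' := by
      show TrivSqZeroExt.inl ((algebraMap A B) 1) + TrivSqZeroExt.inr (d 1) = 1
      rw [map_one, hd1, TrivSqZeroExt.inr_zero, add_zero, TrivSqZeroExt.inl_one]
    map_mul' := by
      intro x y
      show TrivSqZeroExt.inl ((algebraMap A B) (x * y)) + TrivSqZeroExt.inr (d (x * y))
        = (TrivSqZeroExt.inl ((algebraMap A B) x) + TrivSqZeroExt.inr (d x))
          * (TrivSqZeroExt.inl ((algebraMap A B) y) + TrivSqZeroExt.inr (d y))
      apply TrivSqZeroExt.ext
      · simp only [TrivSqZeroExt.fst_add, TrivSqZeroExt.fst_mul, TrivSqZeroExt.fst_inl,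
          TrivSqZeroExt.fst_inr, map_mul, add_zero]
      · simp only [TrivSqZeroExt.snd_add, TrivSqZeroExt.snd_inl, TrivSqZeroExt.snd_inr,
          TrivSqZeroExt.snd_mul, TrivSqZeroExt.fst_add, TrivSqZeroExt.fst_inl,
          TrivSqZeroExt.fst_inr, zero_add, add_zero, smul_eq_mul,
          MulOpposite.smul_eq_mul_unop, MulOpposite.unop_op, hmul]
        ring
    map_zero' := by
      show TrivSqZeroExt.inl ((algebraMap A B) 0) + TrivSqZeroExt.inr (d 0) = 0
      rw [map_zero, hd0, TrivSqZeroExt.inr_zero, add_zero, TrivSqZeroExt.inl_zero]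
    map_add' := by
      intro x y
      show TrivSqZeroExt.inl ((algebraMap A B) (x + y)) + TrivSqZeroExt.inr (d (x + y))
        = (TrivSqZeroExt.inl ((algebraMap A B) x) + TrivSqZeroExt.inr (d x))
          + (TrivSqZeroExt.inl ((algebraMap A B) y) + TrivSqZeroExt.inr (d y))
      apply TrivSqZeroExt.ext
      · simp only [TrivSqZeroExt.fst_add, TrivSqZeroExt.fst_inl, TrivSqZeroExt.fst_inr,
          map_add, add_zero]
      · simp only [TrivSqZeroExt.snd_add, TrivSqZeroExt.snd_inl, TrivSqZeroExt.snd_inr,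
          zero_add, add_zero, hadd] } with hfA
  letI : Algebra A (TrivSqZeroExt B B) := fA.toAlgebra
  have halg : ∀ a : A, algebraMap A (TrivSqZeroExt B B) a
      = TrivSqZeroExt.inl (algebraMap A B a) + TrivSqZeroExt.inr (d a) := fun a => rfl
  set fstRH : TrivSqZeroExt B B →+* B := {
    toFun := TrivSqZeroExt.fst
    map_one' := TrivSqZeroExt.fst_one (R := B) (M := B)
    map_mul' := TrivSqZeroExt.fst_mul (R := B) (M := B)
    map_zero' := TrivSqZeroExt.fst_zero (R := B) (M := B)
    map_add' := TrivSqZeroExt.fst_add (R := B) (M := B) } with hfst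
  set I : Ideal (TrivSqZeroExt B B) := RingHom.ker fstRH with hI
  have hmemI : ∀ x : TrivSqZeroExt B B, x ∈ I ↔ TrivSqZeroExt.fst x = 0 := fun x => Iff.rfl
  have hI2 : I ^ 2 = ⊥ := by
    rw [pow_two]
    apply le_bot_iff.mp
    rw [Ideal.mul_le]
    intro r hr s hs
    rw [Ideal.mem_bot]
    apply TrivSqZeroExt.ext
    · rw [TrivSqZeroExt.fst_mul, (hmemI r).mp hr, zero_mul, TrivSqZeroExt.fst_zero]
    · rw [TrivSqZeroExt.snd_mul, (hmemI r).mp hr, (hmemI s).mp hs, TrivSqZeroExt.snd_zero]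
      simp
  have hInil : IsNilpotent I := ⟨2, hI2⟩
  set gq : B →ₐ[A] (TrivSqZeroExt B B) ⧸ I := {
    toFun := fun b => Ideal.Quotient.mk I (TrivSqZeroExt.inl b)
    map_one' := by
      show Ideal.Quotient.mk I (TrivSqZeroExt.inl 1) = 1
      rw [TrivSqZeroExt.inl_one, map_one]
    map_mul' := by
      intro x y
      show Ideal.Quotient.mk I (TrivSqZeroExt.inl (x * y))
        = Ideal.Quotient.mk I (TrivSqZeroExt.inl x) * Ideal.Quotient.mk I (TrivSqZeroExt.inl y)
      rw [← map_mul, TrivSqZeroExt.inl_mul_inl]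
    map_zero' := by
      show Ideal.Quotient.mk I (TrivSqZeroExt.inl 0) = 0
      rw [TrivSqZeroExt.inl_zero, map_zero]
    map_add' := by
      intro x y
      show Ideal.Quotient.mk I (TrivSqZeroExt.inl (x + y))
        = Ideal.Quotient.mk I (TrivSqZeroExt.inl x) + Ideal.Quotient.mk I (TrivSqZeroExt.inl y)
      rw [← map_add, TrivSqZeroExt.inl_add]
    commutes' := by
      intro a
      show Ideal.Quotient.mk I (TrivSqZeroExt.inl (algebraMap A B a))
        = Ideal.Quotient.mk I (algebraMap A (TrivSqZeroExt B B) a)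
      rw [Ideal.Quotient.eq, halg]
      rw [hmemI]
      simp } with hgq
  set L := Algebra.FormallySmooth.lift I hInil gq with hL
  have hLmk : ∀ b : B, Ideal.Quotient.mk I (L b) = Ideal.Quotient.mk I (TrivSqZeroExt.inl b) :=
    fun b => Algebra.FormallySmooth.mk_lift I hInil gq b
  have hLfst : ∀ b : B, TrivSqZeroExt.fst (L b) = b := by
    intro b
    have h1 := (Ideal.Quotient.eq).mp (hLmk b)
    rw [hmemI, TrivSqZeroExt.fst_sub, TrivSqZeroExt.fst_inl, sub_eq_zero] at h1
    exact h1
  refine ⟨fun b => TrivSqZeroExt.snd (L b), ⟨?_, ?_⟩, ?_⟩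
  · intro x y
    show TrivSqZeroExt.snd (L (x + y)) = TrivSqZeroExt.snd (L x) + TrivSqZeroExt.snd (L y)
    rw [map_add, TrivSqZeroExt.snd_add]
  · intro x y
    show TrivSqZeroExt.snd (L (x * y))
      = x * TrivSqZeroExt.snd (L y) + y * TrivSqZeroExt.snd (L x)
    rw [map_mul, TrivSqZeroExt.snd_mul, hLfst, hLfst, smul_eq_mul,
      MulOpposite.smul_eq_mul_unop, MulOpposite.unop_op]
    ring
  · intro a
    show TrivSqZeroExt.snd (L (algebraMap A B a)) = d a
    have hc : L (algebraMap A B a) = algebraMap A (TrivSqZeroExt B B) a := L.commutes a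
    rw [hc, halg, TrivSqZeroExt.snd_add, TrivSqZeroExt.snd_inl, TrivSqZeroExt.snd_inr, zero_add]

end Ext

/-! ### Transporting the extension property along ring equivalences -/

section Transport

lemma derivO_extend_transport {A B A' B' : Type*} [CommRing A] [CommRing B]
    [CommRing A'] [CommRing B'] (φ : A →+* B) (φ' : A' →+* B')
    (eA : A ≃+* A') (eB : B ≃+* B') (hcomm : ∀ a : A, eB (φ a) = φ' (eA a))
    (h : ∀ d : A → B, (∀ x y, d (x + y) = d x + d y) →
        (∀ x y, d (x * y) = φ x * d y + φ y * d x) →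
        ∃ D : B → B, IsDerivO D ∧ ∀ a, D (φ a) = d a)
    (d' : A' → B') (hadd : ∀ x y, d' (x + y) = d' x + d' y)
    (hmul : ∀ x y, d' (x * y) = φ' x * d' y + φ' y * d' x) :
    ∃ D' : B' → B', IsDerivO D' ∧ ∀ a, D' (φ' a) = d' a := by
  have hcomm' : ∀ a : A', φ' a = eB (φ (eA.symm a)) := by
    intro a
    rw [hcomm, eA.apply_symm_apply]
  obtain ⟨D, hD, hDφ⟩ := h (fun a => eB.symm (d' (eA a)))
    (fun x y => by
      show eB.symm (d' (eA (x + y))) = eB.symm (d' (eA x)) + eB.symm (d' (eA y))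
      rw [map_add, hadd, map_add])
    (fun x y => by
      show eB.symm (d' (eA (x * y)))
        = φ x * eB.symm (d' (eA y)) + φ y * eB.symm (d' (eA x))
      rw [map_mul, hmul, map_add, map_mul, map_mul]
      congr 1
      · congr 1
        rw [← hcomm, eB.symm_apply_apply]
      · congr 1
        rw [← hcomm, eB.symm_apply_apply])
  refine ⟨fun x => eB (D (eB.symm x)), ⟨?_, ?_⟩, ?_⟩
  · intro x y
    show eB (D (eB.symm (x + y))) = eB (D (eB.symm x)) + eB (D (eB.symm y))
    rw [map_add, hD.1, map_add]
  · intro x y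
    show eB (D (eB.symm (x * y)))
      = x * eB (D (eB.symm y)) + y * eB (D (eB.symm x))
    rw [map_mul, hD.2, map_add, map_mul, map_mul, eB.apply_symm_apply, eB.apply_symm_apply]
  · intro a
    show eB (D (eB.symm (φ' a))) = d' a
    rw [hcomm' a, eB.symm_apply_apply, hDφ, eA.apply_symm_apply, eB.apply_symm_apply]

end Transport

/-! ### Extension of derivations to a separable base extension -/

section TensorExt

lemma derivO_extend_tensor_aux {k K R₀ : Type uk} [Field k] [Field K] [Algebra k K]
    [Algebra.IsSeparable k K] [CommRing R₀] [Algebra k R₀]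
    {R : Type uR} [CommRing R] [Algebra k R] (e : R₀ ≃ₐ[k] R)
    (d : R → R ⊗[k] K) (hadd : ∀ x y, d (x + y) = d x + d y)
    (hmul : ∀ x y : R, d (x * y) = (x ⊗ₜ 1) * d y + (y ⊗ₜ 1) * d x) :
    ∃ D : R ⊗[k] K → R ⊗[k] K, IsDerivO D ∧ ∀ r : R, D (r ⊗ₜ 1) = d r := by
  classical
  haveI : Algebra.FormallyEtale k K := Algebra.FormallyEtale.of_isSeparable k K
  haveI hFS : Algebra.FormallySmooth R₀ (R₀ ⊗[k] K) := inferInstance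
  let g : (R₀ ⊗[k] K) ≃ₐ[k] (R ⊗[k] K) :=
    Algebra.TensorProduct.congr e AlgEquiv.refl
  have hcomm : ∀ a : R₀, g.toRingEquiv (algebraMap R₀ (R₀ ⊗[k] K) a)
      = (Algebra.TensorProduct.includeLeftRingHom (R := k) (A := R) (B := K)) (e.toRingEquiv a) := by
    intro a
    show g (a ⊗ₜ 1) = (e a) ⊗ₜ 1
    rw [show (g (a ⊗ₜ 1) : R ⊗[k] K)
      = Algebra.TensorProduct.map e.toAlgHom (AlgHom.id k K) (a ⊗ₜ 1) from rfl,
      Algebra.TensorProduct.map_tmul]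
    rfl
  have hbase := derivO_extend_transport (algebraMap R₀ (R₀ ⊗[k] K))
    (Algebra.TensorProduct.includeLeftRingHom (R := k) (A := R) (B := K))
    e.toRingEquiv g.toRingEquiv hcomm
    (fun d0 h1 h2 => derivO_extend_of_formallySmooth (A := R₀) (B := R₀ ⊗[k] K) d0 h1 h2)
  obtain ⟨D, hD, hDφ⟩ := hbase d hadd hmul
  exact ⟨D, hD, hDφ⟩

lemma derivO_extend_tensor {k K : Type uk} [Field k] [Field K] [Algebra k K]
    [Algebra.IsSeparable k K] {R : Type uR} [CommRing R] [Algebra k R]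
    (hfg : Algebra.FiniteType k R)
    (d : R → R ⊗[k] K) (hadd : ∀ x y, d (x + y) = d x + d y)
    (hmul : ∀ x y : R, d (x * y) = (x ⊗ₜ 1) * d y + (y ⊗ₜ 1) * d x) :
    ∃ D : R ⊗[k] K → R ⊗[k] K, IsDerivO D ∧ ∀ r : R, D (r ⊗ₜ 1) = d r := by
  classical
  obtain ⟨n, f, hf⟩ := Algebra.FiniteType.iff_quotient_mvPolynomial''.mp hfg
  exact derivO_extend_tensor_aux (Ideal.quotientKerAlgEquivOfSurjective hf) d hadd hmul

end TensorExt

/-! ### Combinations of derivations -/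

section Comb

variable {B : Type*} [CommRing B]

lemma isDerivO_sub {D₁ D₂ : B → B} (h₁ : IsDerivO D₁) (h₂ : IsDerivO D₂) :
    IsDerivO (fun x => D₁ x - D₂ x) := by
  constructor
  · intro x y
    simp only [h₁.1, h₂.1]; ring
  · intro x y
    simp only [h₁.2, h₂.2]; ring

lemma isDerivO_add {D₁ D₂ : B → B} (h₁ : IsDerivO D₁) (h₂ : IsDerivO D₂) :
    IsDerivO (fun x => D₁ x + D₂ x) := by
  constructor
  · intro x y
    simp only [h₁.1, h₂.1]; ring
  · intro x y
    simp only [h₁.2, h₂.2]; ring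

lemma isDerivO_const_mul (c : B) {D : B → B} (h : IsDerivO D) :
    IsDerivO (fun x => c * D x) := by
  constructor
  · intro x y
    simp only [h.1]; ring
  · intro x y
    simp only [h.2]; ring

end Comb

/-! ### Extension of biderivations -/

section BideriveExtend

lemma biderivO_extend {A B : Type*} [CommRing A] [CommRing B] (φ : A →+* B)
    (hEXT : ∀ d : A → B, (∀ x y, d (x + y) = d x + d y) →
        (∀ x y, d (x * y) = φ x * d y + φ y * d x) →
        ∃ D : B → B, IsDerivO D ∧ ∀ a, D (φ a) = d a)
    (hUNI : ∀ D : B → B, IsDerivO D → (∀ a, D (φ a) = 0) → ∀ x, D x = 0)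
    (b : A → A → A) (hb : IsBiderivO b) :
    ∃ b' : B → B → B, IsBiderivO b' ∧ ∀ a a', b' (φ a) (φ a') = φ (b a a') := by
  classical
  have hd : ∀ a : A, ∃ D : B → B, IsDerivO D ∧ ∀ x : A, D (φ x) = φ (b a x) := by
    intro a
    apply hEXT (fun x => φ (b a x))
    · intro x y
      rw [(hb.1 a).1, map_add]
    · intro x y
      rw [(hb.1 a).2, map_add, map_mul, map_mul]
  choose d hdD hdφ using hd
  have hd_add : ∀ a a' : A, ∀ y : B, d (a + a') y = d a y + d a' y := by
    intro a a' y
    have hz := hUNI (fun z => d (a + a') z - (d a z + d a' z))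
      (isDerivO_sub (hdD _) (isDerivO_add (hdD _) (hdD _)))
      (fun x => by simp only [hdφ, (hb.2 x).1, map_add]; ring)
    exact sub_eq_zero.mp (hz y)
  have hd_mul : ∀ a a' : A, ∀ y : B, d (a * a') y = φ a * d a' y + φ a' * d a y := by
    intro a a' y
    have hz := hUNI (fun z => d (a * a') z - (φ a * d a' z + φ a' * d a z))
      (isDerivO_sub (hdD _)
        (isDerivO_add (isDerivO_const_mul _ (hdD _)) (isDerivO_const_mul _ (hdD _))))
      (fun x => by simp only [hdφ, (hb.2 x).2, map_add, map_mul]; ring)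
    exact sub_eq_zero.mp (hz y)
  have he : ∀ y : B, ∃ E : B → B, IsDerivO E ∧ ∀ a : A, E (φ a) = d a y := by
    intro y
    exact hEXT (fun a => d a y) (fun a a' => hd_add a a' y) (fun a a' => hd_mul a a' y)
  choose E hED hEφ using he
  have hE_add : ∀ (y y' : B) (x : B), E (y + y') x = E y x + E y' x := by
    intro y y' x
    have hz := hUNI (fun z => E (y + y') z - (E y z + E y' z))
      (isDerivO_sub (hED _) (isDerivO_add (hED _) (hED _)))
      (fun a => by simp only [hEφ, (hdD a).1]; ring)
    exact sub_eq_zero.mp (hz x)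
  have hE_mul : ∀ (y y' : B) (x : B), E (y * y') x = y * E y' x + y' * E y x := by
    intro y y' x
    have hz := hUNI (fun z => E (y * y') z - (y * E y' z + y' * E y z))
      (isDerivO_sub (hED _)
        (isDerivO_add (isDerivO_const_mul _ (hED _)) (isDerivO_const_mul _ (hED _))))
      (fun a => by simp only [hEφ, (hdD a).2]; ring)
    exact sub_eq_zero.mp (hz x)
  refine ⟨fun x y => E y x, ⟨?_, ?_⟩, ?_⟩
  · intro x
    exact ⟨fun y y' => hE_add y y' x, fun y y' => hE_mul y y' x⟩
  · intro s
    exact ⟨(hED s).1, (hED s).2⟩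
  · intro a a'
    simp only [hEφ, hdφ]

end BideriveExtend
/-- Unique compatible base extension to the algebraic closure (Proposition 3.4 of
"Commutative bidifferential algebra"). -/
theorem biderivation_base_extension_algebraicClosure
    {k R : Type*} [Field k] [CharZero k]
    [CommRing R] [IsDomain R] [Algebra k R]
    (hfg : Algebra.FiniteType k R)
    (bk : k → k → k) (hbk : IsBiderivO bk)
    (bR : R → R → R) (hbR : IsBiderivO bR)
    (hext : ∀ c c' : k, bR (algebraMap k R c) (algebraMap k R c') = algebraMap k R (bk c c')) :
    ∃ b' : R ⊗[k] AlgebraicClosure k → R ⊗[k] AlgebraicClosure k → R ⊗[k] AlgebraicClosure k,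
      (IsBiderivO b' ∧ ∀ r r' : R, b' (r ⊗ₜ 1) (r' ⊗ₜ 1) = bR r r' ⊗ₜ 1) ∧
      (∀ b'' : R ⊗[k] AlgebraicClosure k → R ⊗[k] AlgebraicClosure k → R ⊗[k] AlgebraicClosure k,
        (IsBiderivO b'' ∧ ∀ r r' : R, b'' (r ⊗ₜ 1) (r' ⊗ₜ 1) = bR r r' ⊗ₜ 1) → b'' = b') ∧
      (∃ bkbar : AlgebraicClosure k → AlgebraicClosure k → AlgebraicClosure k,
        IsBiderivO bkbar ∧
        (∀ c c' : k,
          bkbar (algebraMap k (AlgebraicClosure k) c) (algebraMap k (AlgebraicClosure k) c')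
            = algebraMap k (AlgebraicClosure k) (bk c c')) ∧
        (∀ c c' : AlgebraicClosure k,
          b' ((1:R) ⊗ₜ c) ((1:R) ⊗ₜ c') = (1:R) ⊗ₜ bkbar c c')) ∧
      (∀ I : Ideal R, IsBidiffIdeal bR I →
        IsBidiffIdeal b' (Ideal.map (Algebra.TensorProduct.includeLeftRingHom
          (R := k) (A := R) (B := AlgebraicClosure k)) I)) := by
  classical
  set φ : R →+* R ⊗[k] AlgebraicClosure k :=
    Algebra.TensorProduct.includeLeftRingHom (R := k) (A := R) (B := AlgebraicClosure k)
    with hφdef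
  have hφ : ∀ r : R, φ r = r ⊗ₜ 1 := fun _ => rfl
  -- Extension property for φ
  have hEXT : ∀ d : R → R ⊗[k] AlgebraicClosure k,
      (∀ x y, d (x + y) = d x + d y) →
      (∀ x y, d (x * y) = φ x * d y + φ y * d x) →
      ∃ D, IsDerivO D ∧ ∀ a, D (φ a) = d a := by
    intro d h1 h2
    obtain ⟨D, hD, hDr⟩ := derivO_extend_tensor (K := AlgebraicClosure k) hfg d h1
      (fun x y => h2 x y)
    exact ⟨D, hD, fun a => hDr a⟩
  -- Uniqueness property for φ, with arbitrary target
  have hUNIS : ∀ D : R ⊗[k] AlgebraicClosure k → R ⊗[k] AlgebraicClosure k,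
      IsDerivO D → (∀ a, D (φ a) = 0) → ∀ x, D x = 0 := by
    intro D hD h0
    exact derivO_eq_zero_tensor (RingHom.id _) D hD.1
      (fun x y => by simpa using hD.2 x y) (fun r => h0 r)
  obtain ⟨b', hb'B, hb'φ⟩ := biderivO_extend φ hEXT hUNIS bR hbR
  refine ⟨b', ⟨hb'B, fun r r' => hb'φ r r'⟩, ?_, ?_, ?_⟩
  · -- uniqueness of b'
    rintro b'' ⟨hB, hcomp⟩
    have step1 : ∀ (a : R) (y : R ⊗[k] AlgebraicClosure k), b'' (φ a) y = b' (φ a) y := by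
      intro a y
      have hz := hUNIS (fun z => b'' (φ a) z - b' (φ a) z)
        (isDerivO_sub (hB.1 (φ a)) (hb'B.1 (φ a)))
        (fun a' => sub_eq_zero.mpr ((hcomp a a').trans (hb'φ a a').symm))
      exact sub_eq_zero.mp (hz y)
    have step2 : ∀ (x y : R ⊗[k] AlgebraicClosure k), b'' x y = b' x y := by
      intro x y
      have hz := hUNIS (fun z => b'' z y - b' z y)
        (isDerivO_sub (hB.2 y) (hb'B.2 y))
        (fun a => sub_eq_zero.mpr (step1 a y))
      exact sub_eq_zero.mp (hz x)
    funext x y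
    exact step2 x y
  · -- the biderivation on the algebraic closure
    have hEXTk : ∀ d : k → AlgebraicClosure k,
        (∀ x y, d (x + y) = d x + d y) →
        (∀ x y, d (x * y) = algebraMap k (AlgebraicClosure k) x * d y
          + algebraMap k (AlgebraicClosure k) y * d x) →
        ∃ D, IsDerivO D ∧ ∀ a, D (algebraMap k (AlgebraicClosure k) a) = d a := by
      intro d h1 h2
      haveI : Algebra.FormallySmooth k (AlgebraicClosure k) := by
        haveI := Algebra.FormallyEtale.of_isSeparable k (AlgebraicClosure k)
        infer_instance
      exact derivO_extend_of_formallySmooth d h1 h2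
    have hUNIk : ∀ D : AlgebraicClosure k → AlgebraicClosure k, IsDerivO D →
        (∀ a : k, D (algebraMap k (AlgebraicClosure k) a) = 0) → ∀ x, D x = 0 := by
      intro D hD h0
      exact derivO_eq_zero_algebraic (RingHom.id _) D hD.1
        (fun x y => by simpa using hD.2 x y) h0
    obtain ⟨bkbar, hkbB, hkbφ⟩ :=
      biderivO_extend (algebraMap k (AlgebraicClosure k)) hEXTk hUNIk bk hbk
    set ι : AlgebraicClosure k →+* R ⊗[k] AlgebraicClosure k :=
      (Algebra.TensorProduct.includeRight (R := k) (A := R)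
        (B := AlgebraicClosure k)).toRingHom with hιdef
    have hι : ∀ c : AlgebraicClosure k, ι c = (1 : R) ⊗ₜ c := fun _ => rfl
    have hφι : ∀ a : k, ι (algebraMap k (AlgebraicClosure k) a) = φ (algebraMap k R a) := by
      intro a
      have h1 : ι (algebraMap k (AlgebraicClosure k) a)
          = algebraMap k (R ⊗[k] AlgebraicClosure k) a :=
        (Algebra.TensorProduct.includeRight (R := k) (A := R)
          (B := AlgebraicClosure k)).commutes a
      have h2 : φ (algebraMap k R a) = algebraMap k (R ⊗[k] AlgebraicClosure k) a :=
        (Algebra.TensorProduct.includeLeft (R := k) (S := k) (A := R)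
          (B := AlgebraicClosure k)).commutes a
      rw [h1, h2]
    have stageA : ∀ (c : k) (c' : AlgebraicClosure k),
        b' (φ (algebraMap k R c)) (ι c') = ι (bkbar (algebraMap k (AlgebraicClosure k) c) c') := by
      intro c c'
      have hz := derivO_eq_zero_algebraic (k := k) ι
        (fun z => b' (φ (algebraMap k R c)) (ι z)
          - ι (bkbar (algebraMap k (AlgebraicClosure k) c) z))
        (fun x y => by
          simp only [map_add, (hb'B.1 (φ (algebraMap k R c))).1,
            (hkbB.1 (algebraMap k (AlgebraicClosure k) c)).1]
          ring)
        (fun x y => by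
          simp only [map_mul, (hb'B.1 (φ (algebraMap k R c))).2,
            (hkbB.1 (algebraMap k (AlgebraicClosure k) c)).2, map_add]
          ring)
        (fun a => by
          have e1 : b' (φ (algebraMap k R c)) (ι (algebraMap k (AlgebraicClosure k) a))
              = φ (bR (algebraMap k R c) (algebraMap k R a)) := by
            rw [hφι a]
            exact hb'φ _ _
          have e2 : ι (bkbar (algebraMap k (AlgebraicClosure k) c)
              (algebraMap k (AlgebraicClosure k) a))
              = φ (bR (algebraMap k R c) (algebraMap k R a)) := by
            rw [hkbφ c a, hφι (bk c a), hext c a]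
          exact sub_eq_zero.mpr (e1.trans e2.symm))
      exact sub_eq_zero.mp (hz c')
    have stageB : ∀ (c c' : AlgebraicClosure k), b' (ι c) (ι c') = ι (bkbar c c') := by
      intro c c'
      have hz := derivO_eq_zero_algebraic (k := k) ι
        (fun z => b' (ι z) (ι c') - ι (bkbar z c'))
        (fun x y => by
          simp only [map_add, (hb'B.2 (ι c')).1, (hkbB.2 c').1]
          ring)
        (fun x y => by
          simp only [map_mul, (hb'B.2 (ι c')).2, (hkbB.2 c').2, map_add]
          ring)
        (fun a => by
          have e1 : b' (ι (algebraMap k (AlgebraicClosure k) a)) (ι c')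
              = ι (bkbar (algebraMap k (AlgebraicClosure k) a) c') := by
            rw [hφι a]
            exact stageA a c'
          exact sub_eq_zero.mpr e1)
      exact sub_eq_zero.mp (hz c)
    exact ⟨bkbar, hkbB, fun c c' => hkbφ c c', fun c c' => stageB c c'⟩
  · -- lifting of bidifferential ideals
    intro I hI
    set J : Ideal (R ⊗[k] AlgebraicClosure k) := Ideal.map φ I with hJ
    have hgen1 : ∀ i ∈ I, ∀ y, b' (φ i) y ∈ J := by
      intro i hi y
      have hz := derivO_eq_zero_tensor (Ideal.Quotient.mk J)
        (fun z => Ideal.Quotient.mk J (b' (φ i) z))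
        (fun x y => by simp only [(hb'B.1 (φ i)).1, map_add])
        (fun x y => by simp only [(hb'B.1 (φ i)).2, map_add, map_mul])
        (fun r => by
          show Ideal.Quotient.mk J (b' (φ i) (φ r)) = 0
          rw [hb'φ i r]
          exact Ideal.Quotient.eq_zero_iff_mem.mpr (Ideal.mem_map_of_mem φ (hI i hi r).1))
      exact Ideal.Quotient.eq_zero_iff_mem.mp (hz y)
    have hgen2 : ∀ i ∈ I, ∀ y, b' y (φ i) ∈ J := by
      intro i hi y
      have hz := derivO_eq_zero_tensor (Ideal.Quotient.mk J)
        (fun z => Ideal.Quotient.mk J (b' z (φ i)))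
        (fun x y => by simp only [(hb'B.2 (φ i)).1, map_add])
        (fun x y => by simp only [(hb'B.2 (φ i)).2, map_add, map_mul])
        (fun r => by
          show Ideal.Quotient.mk J (b' (φ r) (φ i)) = 0
          rw [hb'φ r i]
          exact Ideal.Quotient.eq_zero_iff_mem.mpr (Ideal.mem_map_of_mem φ (hI i hi r).2))
      exact Ideal.Quotient.eq_zero_iff_mem.mp (hz y)
    intro a ha x
    have ha' : a ∈ Ideal.span (φ '' (I : Set R)) := ha
    have H : a ∈ J ∧ b' a x ∈ J ∧ b' x a ∈ J := by
      refine Submodule.span_induction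
        (p := fun a _ => a ∈ J ∧ b' a x ∈ J ∧ b' x a ∈ J) ?_ ?_ ?_ ?_ ha'
      · rintro _ ⟨i, hi, rfl⟩
        exact ⟨Ideal.mem_map_of_mem φ hi, hgen1 i hi x, hgen2 i hi x⟩
      · refine ⟨zero_mem J, ?_, ?_⟩
        · have h0 : b' 0 x = 0 :=
            derivO_map_zero (D := fun z => b' z x) (fun u v => (hb'B.2 x).1 u v)
          rw [h0]; exact zero_mem J
        · have h0 : b' x 0 = 0 :=
            derivO_map_zero (D := fun z => b' x z) (fun u v => (hb'B.1 x).1 u v)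
          rw [h0]; exact zero_mem J
      · rintro u v hu hv ⟨hu1, hu2, hu3⟩ ⟨hv1, hv2, hv3⟩
        refine ⟨add_mem hu1 hv1, ?_, ?_⟩
        · have h : b' (u + v) x = b' u x + b' v x := (hb'B.2 x).1 u v
          rw [h]
          exact add_mem hu2 hv2
        · have h : b' x (u + v) = b' x u + b' x v := (hb'B.1 x).1 u v
          rw [h]
          exact add_mem hu3 hv3
      · rintro s u hu ⟨hu1, hu2, hu3⟩
        have hsu : s • u = s * u := rfl
        refine ⟨by rw [hsu]; exact Ideal.mul_mem_left J s hu1, ?_, ?_⟩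
        · have h : b' (s * u) x = s * b' u x + u * b' s x := (hb'B.2 x).2 s u
          rw [hsu, h]
          exact add_mem (Ideal.mul_mem_left J s hu2) (Ideal.mul_mem_right _ J hu1)
        · have h : b' x (s * u) = s * b' x u + u * b' x s := (hb'B.1 x).2 s u
          rw [hsu, h]
          exact add_mem (Ideal.mul_mem_left J s hu3) (Ideal.mul_mem_right _ J hu1)
    exact ⟨H.2.1, H.2.2⟩
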